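/- In the mixed case there exists a constant C > 0, depending only on δ, β_Ω, such that for all h ∈ (0,1/4) and all (r,z) with 0 < r < δ and 0 < z < h + γ_s(r): |Ψ(r,z)| ≤ C, |∂_zΨ(r,z)| ≤ C/(h+γ_s(r)), |∂_rΨ(r,z)| ≤ C·r/(h+γ_s(r)), |∂_{rr}Ψ(r,z)| ≤ C/(h+γ_s(r)), |∂_{zz}Ψ(r,z)| ≤ C/(h+γ_s(r))², |∂_{rz}Ψ(r,z)| ≤ C·r/(h+γ_s(r))², |∂_{zzz}Ψ(r,z)| ≤ C/(h+γ_s(r))³, |∂_{rrz}Ψ(r,z)| ≤ C/(h+γ_s(r))², and |∂_{rzz}Ψ(r,z)| ≤ C·r/(h+γ_s(r))³. -/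

import Mathlib

open Real MeasureTheory intervalIntegral

noncomputable section

/-- `γ_s(r) = 1 - √(1 - r²)`. -/
def gam (r : ℝ) : ℝ := 1 - Real.sqrt (1 - r ^ 2)

/-- `α_P(r) = (h + γ_s(r)) / β_Ω`. -/
def aP (βΩ h r : ℝ) : ℝ := (h + gam r) / βΩ

/-- The cubic `Φ(r,t) = P₁(r) t + P₂(r) t² + P₃(r) t³` of the mixed case. -/
def Phi (βΩ h r t : ℝ) : ℝ :=
  6 / (4 + aP βΩ h r) * t + 3 * aP βΩ h r / (4 + aP βΩ h r) * t ^ 2 +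
  -(2 * (1 + aP βΩ h r)) / (4 + aP βΩ h r) * t ^ 3

/-- `Ψ(r,z) = Φ(r, z / (h + γ_s(r)))`. -/
def Psi (βΩ h r z : ℝ) : ℝ := Phi βΩ h r (z / (h + gam r))

/-- Partial derivative in the first (`r`) variable. -/
def dR (f : ℝ → ℝ → ℝ) : ℝ → ℝ → ℝ := fun r z => deriv (fun r' => f r' z) r

/-- Partial derivative in the second (`z`) variable. -/
def dZ (f : ℝ → ℝ → ℝ) : ℝ → ℝ → ℝ := fun r z => deriv (fun z' => f r z') z

-- coefficient functions of g and their g-derivatives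
def gA (β g : ℝ) : ℝ := 6*β / (g*(4*β+g))
def gA1 (β g : ℝ) : ℝ := -(6*β*(4*β+2*g)) / (g*(4*β+g))^2
def gA2 (β g : ℝ) : ℝ := 12*β*(16*β^2+12*β*g+3*g^2) / (g*(4*β+g))^3
def gB (β g : ℝ) : ℝ := 3 / (g*(4*β+g))
def gB1 (β g : ℝ) : ℝ := gA1 β g / (2*β)
def gB2 (β g : ℝ) : ℝ := gA2 β g / (2*β)
def gC (β g : ℝ) : ℝ := -(2*(β+g)) / (g^3*(4*β+g))
def gC1 (β g : ℝ) : ℝ := 6*(2*β+g)^2 / (g^4*(4*β+g)^2)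
def gC2 (β g : ℝ) : ℝ := -(12*(2*β+g)*(16*β^2+10*β*g+2*g^2)) / (g^5*(4*β+g)^3)

def gam1 (r : ℝ) : ℝ := r / Real.sqrt (1 - r ^ 2)
def gam2 (r : ℝ) : ℝ := 1 / Real.sqrt (1 - r ^ 2) ^ 3

variable {β g r : ℝ}

lemma hasDerivAt_u (β g : ℝ) : HasDerivAt (fun x : ℝ => x*(4*β+x)) (4*β+2*g) g := by
  have := (hasDerivAt_id g).mul ((hasDerivAt_const g (4*β)).add (hasDerivAt_id g))
  simp only [id_eq] at this
  refine this.congr_deriv ?_; simp only [Pi.add_apply, id_eq]; ring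

lemma hasDerivAt_gA (hβ : 0 < β) (hg : 0 < g) : HasDerivAt (gA β) (gA1 β g) g := by
  have hne : g*(4*β+g) ≠ 0 := by positivity
  have := (hasDerivAt_const g (6*β)).div (hasDerivAt_u β g) hne
  have h2 : (fun x => 6*β / (x*(4*β+x))) = gA β := rfl
  refine this.congr_deriv ?_
  unfold gA1; ring

lemma hasDerivAt_gA1 (hβ : 0 < β) (hg : 0 < g) : HasDerivAt (gA1 β) (gA2 β g) g := by
  have hne : (g*(4*β+g))^2 ≠ 0 := by positivity
  have hnum : HasDerivAt (fun x : ℝ => -(6*β*(4*β+2*x))) (-(12*β)) g := by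
    have := (((hasDerivAt_const g (4*β)).add ((hasDerivAt_id g).const_mul 2)).const_mul (6*β)).neg
    refine this.congr_deriv ?_; ring
  have hden : HasDerivAt (fun x : ℝ => (x*(4*β+x))^2) (2*(g*(4*β+g))*(4*β+2*g)) g := by
    have := (hasDerivAt_u β g).pow 2
    refine this.congr_deriv ?_; push_cast; ring
  have := hnum.div hden hne
  have h2 : (fun x => -(6*β*(4*β+2*x)) / (x*(4*β+x))^2) = gA1 β := rfl
  refine this.congr_deriv ?_
  unfold gA2
  have h1 : g*(4*β+g) ≠ 0 := by positivity
  field_simp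
  ring

lemma gB_eq (hβ : β ≠ 0) : gB β = fun x => gA β x / (2*β) := by
  funext x
  unfold gA gB
  rcases eq_or_ne x 0 with h | h
  · simp [h]
  · rcases eq_or_ne (4*β+x) 0 with h2 | h2
    · rw [h2]; simp
    · field_simp; ring

lemma hasDerivAt_gB (hβ : 0 < β) (hg : 0 < g) : HasDerivAt (gB β) (gB1 β g) g := by
  rw [gB_eq (ne_of_gt hβ)]; exact (hasDerivAt_gA hβ hg).div_const _

lemma hasDerivAt_gC (hβ : 0 < β) (hg : 0 < g) : HasDerivAt (gC β) (gC1 β g) g := by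
  have hne : g^3*(4*β+g) ≠ 0 := by positivity
  have hnum : HasDerivAt (fun x : ℝ => -(2*(β+x))) (-2) g := by
    have := (((hasDerivAt_const g β).add (hasDerivAt_id g)).const_mul 2).neg
    refine this.congr_deriv ?_; ring
  have hden : HasDerivAt (fun x : ℝ => x^3*(4*β+x)) (3*g^2*(4*β+g)+g^3) g := by
    have := (hasDerivAt_pow 3 g).mul ((hasDerivAt_const g (4*β)).add (hasDerivAt_id g))
    refine this.congr_deriv ?_; simp only [Pi.add_apply, Pi.pow_apply, id_eq]; push_cast; ring
  have := hnum.div hden hne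
  have h2 : (fun x => -(2*(β+x)) / (x^3*(4*β+x))) = gC β := rfl
  refine this.congr_deriv ?_
  unfold gC1
  have h1 : g ≠ 0 := ne_of_gt hg
  have h3 : 4*β+g ≠ 0 := by positivity
  field_simp
  ring

lemma hasDerivAt_gC1 (hβ : 0 < β) (hg : 0 < g) : HasDerivAt (gC1 β) (gC2 β g) g := by
  have hne : g^4*(4*β+g)^2 ≠ 0 := by positivity
  have hnum : HasDerivAt (fun x : ℝ => 6*(2*β+x)^2) (2*(2*β+g)*6) g := by
    have := (((hasDerivAt_const g (2*β)).add (hasDerivAt_id g)).pow 2).const_mul 6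
    refine this.congr_deriv ?_; simp only [Pi.add_apply, Pi.pow_apply, id_eq]; push_cast; ring
  have hden : HasDerivAt (fun x : ℝ => x^4*(4*β+x)^2)
      (4*g^3*(4*β+g)^2 + g^4*(2*(4*β+g))) g := by
    have := (hasDerivAt_pow 4 g).mul (((hasDerivAt_const g (4*β)).add (hasDerivAt_id g)).pow 2)
    refine this.congr_deriv ?_; simp only [Pi.add_apply, Pi.pow_apply, id_eq]; push_cast; ring
  have := hnum.div hden hne
  have h2 : (fun x => 6*(2*β+x)^2 / (x^4*(4*β+x)^2)) = gC1 β := rfl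
  refine this.congr_deriv ?_
  unfold gC2
  have h1 : g ≠ 0 := ne_of_gt hg
  have h3 : 4*β+g ≠ 0 := by positivity
  field_simp
  ring

lemma sqrt_pos_of (hr : r^2 < 1) : 0 < Real.sqrt (1 - r^2) := Real.sqrt_pos.2 (by linarith)

lemma hasDerivAt_sqrt1 (hr : r^2 < 1) :
    HasDerivAt (fun x : ℝ => Real.sqrt (1 - x^2)) (-r / Real.sqrt (1 - r^2)) r := by
  have hne : (1 : ℝ) - r^2 ≠ 0 := by nlinarith
  have hin : HasDerivAt (fun x : ℝ => 1 - x^2) (-(2*r)) r := by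
    have := ((hasDerivAt_pow 2 r).const_sub 1)
    refine this.congr_deriv ?_; push_cast; ring
  have := (Real.hasDerivAt_sqrt hne).comp r hin
  refine this.congr_deriv ?_
  have h0 := sqrt_pos_of hr
  field_simp

lemma hasDerivAt_gam (hr : r^2 < 1) : HasDerivAt gam (gam1 r) r := by
  have := (hasDerivAt_sqrt1 hr).const_sub 1
  have h2 : (fun x : ℝ => 1 - Real.sqrt (1 - x^2)) = gam := rfl
  rw [h2] at this
  refine this.congr_deriv ?_
  unfold gam1
  ring

lemma hasDerivAt_gam1 (hr : r^2 < 1) : HasDerivAt gam1 (gam2 r) r := by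
  have h0 := sqrt_pos_of hr
  have hne : Real.sqrt (1 - r^2) ≠ 0 := ne_of_gt h0
  have := (hasDerivAt_id r).div (hasDerivAt_sqrt1 hr) hne
  simp only [id_eq] at this
  have h2 : (fun x : ℝ => x / Real.sqrt (1 - x^2)) = gam1 := rfl
  refine this.congr_deriv ?_
  unfold gam2
  have hsq : Real.sqrt (1 - r^2) ^ 2 = 1 - r^2 := Real.sq_sqrt (by nlinarith)
  have e1 : 1 * Real.sqrt (1 - r^2) - r * (-r / Real.sqrt (1 - r^2)) = 1 / Real.sqrt (1 - r^2) := by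
    field_simp
    linear_combination hsq
  rw [e1]
  field_simp

def PF (β g z : ℝ) : ℝ := gA β g * z + gB β g * z^2 + gC β g * z^3
def PFz (β g z : ℝ) : ℝ := gA β g + 2*gB β g*z + 3*gC β g*z^2
def PFzz (β g z : ℝ) : ℝ := 2*gB β g + 6*gC β g*z
def PFg (β g z : ℝ) : ℝ := gA1 β g * z + gB1 β g * z^2 + gC1 β g * z^3
def PFgz (β g z : ℝ) : ℝ := gA1 β g + 2*gB1 β g*z + 3*gC1 β g*z^2
def PFgzz (β g z : ℝ) : ℝ := 2*gB1 β g + 6*gC1 β g*z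
def PFgg (β g z : ℝ) : ℝ := gA2 β g * z + gB2 β g * z^2 + gC2 β g * z^3
def PFggz (β g z : ℝ) : ℝ := gA2 β g + 2*gB2 β g*z + 3*gC2 β g*z^2

lemma gam_nonneg (r : ℝ) : 0 ≤ gam r := by
  unfold gam
  have := Real.sqrt_le_one.2 (show (1:ℝ) - r^2 ≤ 1 by nlinarith [sq_nonneg r])
  linarith

lemma gam_le_one (r : ℝ) : gam r ≤ 1 := by
  unfold gam
  have := Real.sqrt_nonneg (1 - r^2)
  linarith

lemma sq_le_two_gam {r : ℝ} (hr : r^2 ≤ 1) : r^2 ≤ 2 * gam r := by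
  unfold gam
  have h1 : Real.sqrt (1 - r^2) ≤ 1 - r^2/2 := by
    have h2 : Real.sqrt (1 - r^2) ≤ Real.sqrt ((1 - r^2/2)^2) := Real.sqrt_le_sqrt (by nlinarith)
    rwa [Real.sqrt_sq (by nlinarith)] at h2
  linarith

lemma hgpos {h : ℝ} (hh : 0 < h) (r : ℝ) : 0 < h + gam r := by
  have := gam_nonneg r; linarith

lemma hasDerivAt_gB1 {β g : ℝ} (hβ : 0 < β) (hg : 0 < g) :
    HasDerivAt (gB1 β) (gB2 β g) g := (hasDerivAt_gA1 hβ hg).div_const (2*β)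

lemma cubic_hasDeriv (a b c z : ℝ) :
    HasDerivAt (fun x : ℝ => a*x + b*x^2 + c*x^3) (a + 2*b*z + 3*c*z^2) z := by
  have := (((hasDerivAt_id z).const_mul a).add ((hasDerivAt_pow 2 z).const_mul b)).add
    ((hasDerivAt_pow 3 z).const_mul c)
  simp only [id_eq] at this
  refine this.congr_deriv ?_
  push_cast; ring

lemma quad_hasDeriv (a b c z : ℝ) :
    HasDerivAt (fun x : ℝ => a + 2*b*x + 3*c*x^2) (2*b + 6*c*z) z := by
  have := ((hasDerivAt_const z a).add ((hasDerivAt_id z).const_mul (2*b))).add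
    ((hasDerivAt_pow 2 z).const_mul (3*c))
  simp only [id_eq] at this
  refine this.congr_deriv ?_
  push_cast; ring

lemma lin_hasDeriv (b c z : ℝ) :
    HasDerivAt (fun x : ℝ => 2*b + 6*c*x) (6*c) z := by
  have := (hasDerivAt_const z (2*b)).add ((hasDerivAt_id z).const_mul (6*c))
  simp only [id_eq] at this
  refine this.congr_deriv ?_
  ring

lemma psi_eq {β h : ℝ} (hβ : 0 < β) (hh : 0 < h) (r z : ℝ) :
    Psi β h r z = PF β (h + gam r) z := by
  have hg := hgpos hh r
  unfold Psi Phi aP PF gA gB gC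
  have h1 : h + gam r ≠ 0 := ne_of_gt hg
  have h2 : β ≠ 0 := ne_of_gt hβ
  have h3 : 4*β + (h + gam r) ≠ 0 := by positivity
  have h4 : 4 + (h + gam r)/β ≠ 0 := by positivity
  field_simp

lemma LZ {β h : ℝ} (hβ : 0 < β) (hh : 0 < h) (r z : ℝ) :
    dZ (Psi β h) r z = PFz β (h + gam r) z := by
  show deriv (fun z' => Psi β h r z') z = _
  have he : (fun z' => Psi β h r z') = fun z' => PF β (h + gam r) z' :=
    funext fun z' => psi_eq hβ hh r z'
  rw [he]
  simp only [PF, PFz]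
  exact (cubic_hasDeriv _ _ _ z).deriv

lemma LZZ {β h : ℝ} (hβ : 0 < β) (hh : 0 < h) (r z : ℝ) :
    dZ (dZ (Psi β h)) r z = PFzz β (h + gam r) z := by
  show deriv (fun z' => dZ (Psi β h) r z') z = _
  have he : (fun z' => dZ (Psi β h) r z') = fun z' => PFz β (h + gam r) z' :=
    funext fun z' => LZ hβ hh r z'
  rw [he]
  simp only [PFz, PFzz]
  exact (quad_hasDeriv _ _ _ z).deriv

lemma LZZZ {β h : ℝ} (hβ : 0 < β) (hh : 0 < h) (r z : ℝ) :
    dZ (dZ (dZ (Psi β h))) r z = 6 * gC β (h + gam r) := by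
  show deriv (fun z' => dZ (dZ (Psi β h)) r z') z = _
  have he : (fun z' => dZ (dZ (Psi β h)) r z') = fun z' => PFzz β (h + gam r) z' :=
    funext fun z' => LZZ hβ hh r z'
  rw [he]
  simp only [PFzz]
  exact (lin_hasDeriv _ _ z).deriv

lemma hcomp_gam {h r : ℝ} (hr : r^2 < 1) :
    HasDerivAt (fun r' => h + gam r') (gam1 r) r := (hasDerivAt_gam hr).const_add h

lemma hasDerivAt_PFcomp {β h r : ℝ} (z : ℝ) (hβ : 0 < β) (hh : 0 < h) (hr : r^2 < 1) :
    HasDerivAt (fun r' => PF β (h + gam r') z) (PFg β (h + gam r) z * gam1 r) r := by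
  have hg := hgpos hh r
  have hA := (hasDerivAt_gA hβ hg).comp r (hcomp_gam hr)
  have hB := (hasDerivAt_gB hβ hg).comp r (hcomp_gam hr)
  have hC := (hasDerivAt_gC hβ hg).comp r (hcomp_gam hr)
  simp only [Function.comp_def] at hA hB hC
  have := ((hA.mul_const z).add (hB.mul_const (z^2))).add (hC.mul_const (z^3))
  simp only [PF, PFg]
  refine this.congr_deriv ?_
  ring

lemma hasDerivAt_PFgcomp {β h r : ℝ} (z : ℝ) (hβ : 0 < β) (hh : 0 < h) (hr : r^2 < 1) :
    HasDerivAt (fun r' => PFg β (h + gam r') z) (PFgg β (h + gam r) z * gam1 r) r := by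
  have hg := hgpos hh r
  have hA := (hasDerivAt_gA1 hβ hg).comp r (hcomp_gam hr)
  have hB := (hasDerivAt_gB1 hβ hg).comp r (hcomp_gam hr)
  have hC := (hasDerivAt_gC1 hβ hg).comp r (hcomp_gam hr)
  simp only [Function.comp_def] at hA hB hC
  have := ((hA.mul_const z).add (hB.mul_const (z^2))).add (hC.mul_const (z^3))
  simp only [PFg, PFgg]
  refine this.congr_deriv ?_
  ring

lemma LR {β h r : ℝ} (hβ : 0 < β) (hh : 0 < h) (hr : r^2 < 1) (z : ℝ) :
    dR (Psi β h) r z = PFg β (h + gam r) z * gam1 r := by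
  show deriv (fun r' => Psi β h r' z) r = _
  have he : (fun r' => Psi β h r' z) = fun r' => PF β (h + gam r') z :=
    funext fun r' => psi_eq hβ hh r' z
  rw [he]
  exact (hasDerivAt_PFcomp z hβ hh hr).deriv

lemma LRR {β h r : ℝ} (hβ : 0 < β) (hh : 0 < h) (hr : r^2 < 1) (z : ℝ) :
    dR (dR (Psi β h)) r z
      = PFgg β (h + gam r) z * (gam1 r)^2 + PFg β (h + gam r) z * gam2 r := by
  show deriv (fun r' => dR (Psi β h) r' z) r = _
  have hU : {x : ℝ | x^2 < 1} ∈ nhds r :=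
    (isOpen_lt (continuous_pow 2) continuous_const).mem_nhds hr
  have hev : (fun r' => dR (Psi β h) r' z) =ᶠ[nhds r]
      (fun r' => PFg β (h + gam r') z * gam1 r') := by
    filter_upwards [hU] with x hx
    exact LR hβ hh hx z
  rw [hev.deriv_eq]
  have := (hasDerivAt_PFgcomp z hβ hh hr).mul (hasDerivAt_gam1 hr)
  rw [show (fun r' => PFg β (h + gam r') z * gam1 r') = ((fun r' => PFg β (h + gam r') z) * gam1) from rfl, this.deriv]
  ring

lemma LRZ {β h r : ℝ} (hβ : 0 < β) (hh : 0 < h) (hr : r^2 < 1) (z : ℝ) :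
    dZ (dR (Psi β h)) r z = PFgz β (h + gam r) z * gam1 r := by
  show deriv (fun z' => dR (Psi β h) r z') z = _
  have he : (fun z' => dR (Psi β h) r z') = fun z' => PFg β (h + gam r) z' * gam1 r :=
    funext fun z' => LR hβ hh hr z'
  rw [he]
  simp only [PFg, PFgz]
  exact ((cubic_hasDeriv _ _ _ z).mul_const _).deriv

lemma LRZZ {β h r : ℝ} (hβ : 0 < β) (hh : 0 < h) (hr : r^2 < 1) (z : ℝ) :
    dZ (dZ (dR (Psi β h))) r z = PFgzz β (h + gam r) z * gam1 r := by
  show deriv (fun z' => dZ (dR (Psi β h)) r z') z = _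
  have he : (fun z' => dZ (dR (Psi β h)) r z') = fun z' => PFgz β (h + gam r) z' * gam1 r :=
    funext fun z' => LRZ hβ hh hr z'
  rw [he]
  simp only [PFgz, PFgzz]
  exact ((quad_hasDeriv _ _ _ z).mul_const _).deriv

lemma LRRZ {β h r : ℝ} (hβ : 0 < β) (hh : 0 < h) (hr : r^2 < 1) (z : ℝ) :
    dZ (dR (dR (Psi β h))) r z
      = PFggz β (h + gam r) z * (gam1 r)^2 + PFgz β (h + gam r) z * gam2 r := by
  show deriv (fun z' => dR (dR (Psi β h)) r z') z = _
  have he : (fun z' => dR (dR (Psi β h)) r z')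
      = fun z' => PFgg β (h + gam r) z' * (gam1 r)^2 + PFg β (h + gam r) z' * gam2 r :=
    funext fun z' => LRR hβ hh hr z'
  rw [he]
  simp only [PFgg, PFggz, PFg, PFgz]
  exact (((cubic_hasDeriv _ _ _ z).mul_const _).add ((cubic_hasDeriv _ _ _ z).mul_const _)).deriv
-- PART3: bounds
lemma term_bound {a z g C : ℝ} (hz0 : 0 ≤ z) (hzg : z ≤ g) (hg : 0 < g) (hg2 : g ≤ 2)
    (j i k e : ℕ) (hk : k + e = j + i) (hC : 0 ≤ C) (h : |a| * g ^ k ≤ C) :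
    |a| * z ^ j * g ^ i ≤ C * 2 ^ e := by
  have h1 : |a| * z^j * g^i ≤ (|a| * g^k) * g^e := by
    have hz : z^j ≤ g^j := pow_le_pow_left₀ hz0 hzg j
    have e2 : (|a| * g^k) * g^e = |a| * g^j * g^i := by
      rw [show |a| * g^k * g^e = |a| * (g^k * g^e) by ring, ← pow_add, hk, pow_add]; ring
    rw [e2]
    have := mul_le_mul_of_nonneg_left hz (abs_nonneg a)
    exact mul_le_mul_of_nonneg_right this (pow_nonneg hg.le i)
  have h3 : g^e ≤ 2^e := pow_le_pow_left₀ hg.le hg2 e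
  exact h1.trans (mul_le_mul h h3 (pow_nonneg hg.le e) hC)

variable {z h : ℝ}

lemma bA (hβ : 0 < β) (hg : 0 < g) : |gA β g| * g ^ 1 ≤ 2 := by
  unfold gA
  rw [pow_one]
  rw [abs_of_nonneg (by positivity), div_mul_eq_mul_div, div_le_iff₀ (by positivity)]
  nlinarith

lemma bA1 (hβ : 0 < β) (hg : 0 < g) : |gA1 β g| * g ^ 2 ≤ 3 := by
  unfold gA1
  rw [abs_div, abs_neg, abs_of_nonneg (by positivity), abs_of_nonneg (by positivity),
    div_mul_eq_mul_div, div_le_iff₀ (by positivity)]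
  nlinarith [sq_nonneg g, mul_pos hβ hg]

lemma bA2 (hβ : 0 < β) (hg : 0 < g) : |gA2 β g| * g ^ 3 ≤ 9 := by
  unfold gA2
  rw [abs_of_nonneg (by positivity), div_mul_eq_mul_div, div_le_iff₀ (by positivity)]
  have key : 12*β*(16*β^2+12*β*g+3*g^2) ≤ 9*(4*β+g)^3 := by nlinarith [mul_pos hβ hg, sq_nonneg g, sq_nonneg β, mul_pos (mul_pos hβ hβ) hg, mul_pos (mul_pos hβ hg) hg]
  nlinarith [mul_le_mul_of_nonneg_right key (pow_nonneg hg.le 3), pow_pos hg 3]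

lemma bB (hβ : 0 < β) (hg : 0 < g) : |gB β g| * g ^ 1 ≤ 1/β := by
  unfold gB
  rw [pow_one]
  rw [abs_of_nonneg (by positivity), div_mul_eq_mul_div, div_le_div_iff₀ (by positivity) hβ]
  nlinarith

lemma bB1 (hβ : 0 < β) (hg : 0 < g) : |gB1 β g| * g ^ 2 ≤ 2/β := by
  unfold gB1
  rw [abs_div, abs_of_pos (by positivity : (0:ℝ) < 2*β), div_mul_eq_mul_div,
    div_le_div_iff₀ (by positivity) hβ]
  nlinarith [mul_le_mul_of_nonneg_right (bA1 hβ hg) hβ.le]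

lemma bB2 (hβ : 0 < β) (hg : 0 < g) : |gB2 β g| * g ^ 3 ≤ 5/β := by
  unfold gB2
  rw [abs_div, abs_of_pos (by positivity : (0:ℝ) < 2*β), div_mul_eq_mul_div,
    div_le_div_iff₀ (by positivity) hβ]
  nlinarith [mul_le_mul_of_nonneg_right (bA2 hβ hg) hβ.le]

lemma bC (hβ : 0 < β) (hg : 0 < g) : |gC β g| * g ^ 3 ≤ 2 := by
  unfold gC
  rw [abs_div, abs_neg, abs_of_nonneg (by positivity), abs_of_nonneg (by positivity),
    div_mul_eq_mul_div, div_le_iff₀ (by positivity)]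
  nlinarith [pow_pos hg 3, mul_le_mul_of_nonneg_right (show 2*(β+g) ≤ 2*(4*β+g) by nlinarith) (pow_nonneg hg.le 3)]

lemma bC1 (hβ : 0 < β) (hg : 0 < g) : |gC1 β g| * g ^ 4 ≤ 6 := by
  unfold gC1
  rw [abs_of_nonneg (by positivity), div_mul_eq_mul_div, div_le_iff₀ (by positivity)]
  have key : 6*(2*β+g)^2 ≤ 6*(4*β+g)^2 := by nlinarith [mul_pos hβ hg, sq_nonneg β]
  nlinarith [mul_le_mul_of_nonneg_right key (pow_nonneg hg.le 4), pow_pos hg 4]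

lemma bC2 (hβ : 0 < β) (hg : 0 < g) : |gC2 β g| * g ^ 5 ≤ 24 := by
  unfold gC2
  rw [abs_div, abs_neg, abs_of_nonneg (by positivity), abs_of_nonneg (by positivity),
    div_mul_eq_mul_div, div_le_iff₀ (by positivity)]
  have key : 12*(2*β+g)*(16*β^2+10*β*g+2*g^2) ≤ 24*(4*β+g)^3 := by
    nlinarith [mul_pos hβ hg, sq_nonneg g, sq_nonneg β, mul_pos (mul_pos hβ hβ) hg,
      mul_pos (mul_pos hβ hg) hg, pow_pos hβ 3, pow_pos hg 3]
  nlinarith [mul_le_mul_of_nonneg_right key (pow_nonneg hg.le 5), pow_pos hg 5]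

def K (β : ℝ) : ℝ := 100 + 100/β

lemma K_pos (hβ : 0 < β) : 0 < K β := by unfold K; positivity

lemma bPF (hβ : 0 < β) (hg : 0 < g) (hg2 : g ≤ 2) (hz0 : 0 ≤ z) (hzg : z ≤ g) :
    |PF β g z| ≤ K β := by
  have t1 := term_bound hz0 hzg hg hg2 1 0 1 0 rfl (by norm_num) (bA hβ hg)
  have t2 := term_bound hz0 hzg hg hg2 2 0 1 1 rfl (by positivity) (bB hβ hg)
  have t3 := term_bound hz0 hzg hg hg2 3 0 3 0 rfl (by norm_num) (bC hβ hg)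
  have tri : |PF β g z| ≤ |gA β g| * z^1 + |gB β g| * z^2 + |gC β g| * z^3 := by
    unfold PF
    refine (abs_add_three _ _ _).trans ?_
    simp only [abs_mul]
    rw [abs_of_nonneg hz0, abs_of_nonneg (pow_nonneg hz0 2), abs_of_nonneg (pow_nonneg hz0 3)]
    norm_num
  have hK : (0:ℝ) < β⁻¹ := by positivity
  unfold K
  simp only [div_eq_mul_inv]
  norm_num [div_eq_mul_inv] at t1 t2 t3 tri ⊢
  linarith

lemma bPFz (hβ : 0 < β) (hg : 0 < g) (hg2 : g ≤ 2) (hz0 : 0 ≤ z) (hzg : z ≤ g) :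
    |PFz β g z| * g ≤ K β := by
  have t1 := bA hβ hg
  have t2 := term_bound hz0 hzg hg hg2 1 1 1 1 rfl (by positivity) (bB hβ hg)
  have t3 := term_bound hz0 hzg hg hg2 2 1 3 0 rfl (by norm_num) (bC hβ hg)
  have tri : |PFz β g z| ≤ |gA β g| + 2*|gB β g| * z^1 + 3*|gC β g| * z^2 := by
    unfold PFz
    refine (abs_add_three _ _ _).trans ?_
    simp only [abs_mul]
    rw [abs_of_nonneg hz0, abs_of_nonneg (pow_nonneg hz0 2)]
    norm_num
  have htri := mul_le_mul_of_nonneg_right tri hg.le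
  have hK : (0:ℝ) < β⁻¹ := by positivity
  unfold K
  simp only [div_eq_mul_inv]
  norm_num [div_eq_mul_inv] at t1 t2 t3 htri ⊢
  nlinarith [abs_nonneg (gB β g), abs_nonneg (gC β g)]

lemma bPFzz (hβ : 0 < β) (hg : 0 < g) (hg2 : g ≤ 2) (hz0 : 0 ≤ z) (hzg : z ≤ g) :
    |PFzz β g z| * g ^ 2 ≤ K β := by
  have t1 := term_bound hz0 hzg hg hg2 0 2 1 1 rfl (by positivity) (bB hβ hg)
  have t2 := term_bound hz0 hzg hg hg2 1 2 3 0 rfl (by norm_num) (bC hβ hg)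
  have tri : |PFzz β g z| ≤ 2*|gB β g| + 6*|gC β g| * z^1 := by
    unfold PFzz
    refine (abs_add_le _ _).trans ?_
    simp only [abs_mul]
    rw [abs_of_nonneg hz0]
    norm_num
  have htri := mul_le_mul_of_nonneg_right tri (pow_nonneg hg.le 2)
  have hK : (0:ℝ) < β⁻¹ := by positivity
  unfold K
  simp only [div_eq_mul_inv]
  norm_num [div_eq_mul_inv] at t1 t2 htri ⊢
  nlinarith [abs_nonneg (gB β g), abs_nonneg (gC β g)]

lemma bPFg (hβ : 0 < β) (hg : 0 < g) (hg2 : g ≤ 2) (hz0 : 0 ≤ z) (hzg : z ≤ g) :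
    |PFg β g z| * g ≤ K β := by
  have t1 := term_bound hz0 hzg hg hg2 1 1 2 0 rfl (by norm_num) (bA1 hβ hg)
  have t2 := term_bound hz0 hzg hg hg2 2 1 2 1 rfl (by positivity) (bB1 hβ hg)
  have t3 := term_bound hz0 hzg hg hg2 3 1 4 0 rfl (by norm_num) (bC1 hβ hg)
  have tri : |PFg β g z| ≤ |gA1 β g| * z^1 + |gB1 β g| * z^2 + |gC1 β g| * z^3 := by
    unfold PFg
    refine (abs_add_three _ _ _).trans ?_
    simp only [abs_mul]
    rw [abs_of_nonneg hz0, abs_of_nonneg (pow_nonneg hz0 2), abs_of_nonneg (pow_nonneg hz0 3)]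
    norm_num
  have htri := mul_le_mul_of_nonneg_right tri hg.le
  have hK : (0:ℝ) < β⁻¹ := by positivity
  unfold K
  simp only [div_eq_mul_inv]
  norm_num [div_eq_mul_inv] at t1 t2 t3 htri ⊢
  linarith

lemma bPFgz (hβ : 0 < β) (hg : 0 < g) (hg2 : g ≤ 2) (hz0 : 0 ≤ z) (hzg : z ≤ g) :
    |PFgz β g z| * g ^ 2 ≤ K β := by
  have t1 := bA1 hβ hg
  have t2 := term_bound hz0 hzg hg hg2 1 2 2 1 rfl (by positivity) (bB1 hβ hg)
  have t3 := term_bound hz0 hzg hg hg2 2 2 4 0 rfl (by norm_num) (bC1 hβ hg)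
  have tri : |PFgz β g z| ≤ |gA1 β g| + 2*|gB1 β g| * z^1 + 3*|gC1 β g| * z^2 := by
    unfold PFgz
    refine (abs_add_three _ _ _).trans ?_
    simp only [abs_mul]
    rw [abs_of_nonneg hz0, abs_of_nonneg (pow_nonneg hz0 2)]
    norm_num
  have htri := mul_le_mul_of_nonneg_right tri (pow_nonneg hg.le 2)
  have hK : (0:ℝ) < β⁻¹ := by positivity
  unfold K
  simp only [div_eq_mul_inv]
  norm_num [div_eq_mul_inv] at t1 t2 t3 htri ⊢
  nlinarith [abs_nonneg (gB1 β g), abs_nonneg (gC1 β g)]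

lemma bPFgzz (hβ : 0 < β) (hg : 0 < g) (hg2 : g ≤ 2) (hz0 : 0 ≤ z) (hzg : z ≤ g) :
    |PFgzz β g z| * g ^ 3 ≤ K β := by
  have t1 := term_bound hz0 hzg hg hg2 0 3 2 1 rfl (by positivity) (bB1 hβ hg)
  have t2 := term_bound hz0 hzg hg hg2 1 3 4 0 rfl (by norm_num) (bC1 hβ hg)
  have tri : |PFgzz β g z| ≤ 2*|gB1 β g| + 6*|gC1 β g| * z^1 := by
    unfold PFgzz
    refine (abs_add_le _ _).trans ?_
    simp only [abs_mul]
    rw [abs_of_nonneg hz0]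
    norm_num
  have htri := mul_le_mul_of_nonneg_right tri (pow_nonneg hg.le 3)
  have hK : (0:ℝ) < β⁻¹ := by positivity
  unfold K
  simp only [div_eq_mul_inv]
  norm_num [div_eq_mul_inv] at t1 t2 htri ⊢
  nlinarith [abs_nonneg (gB1 β g), abs_nonneg (gC1 β g)]

lemma bPFgg (hβ : 0 < β) (hg : 0 < g) (hg2 : g ≤ 2) (hz0 : 0 ≤ z) (hzg : z ≤ g) :
    |PFgg β g z| * g ^ 2 ≤ K β := by
  have t1 := term_bound hz0 hzg hg hg2 1 2 3 0 rfl (by norm_num) (bA2 hβ hg)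
  have t2 := term_bound hz0 hzg hg hg2 2 2 3 1 rfl (by positivity) (bB2 hβ hg)
  have t3 := term_bound hz0 hzg hg hg2 3 2 5 0 rfl (by norm_num) (bC2 hβ hg)
  have tri : |PFgg β g z| ≤ |gA2 β g| * z^1 + |gB2 β g| * z^2 + |gC2 β g| * z^3 := by
    unfold PFgg
    refine (abs_add_three _ _ _).trans ?_
    simp only [abs_mul]
    rw [abs_of_nonneg hz0, abs_of_nonneg (pow_nonneg hz0 2), abs_of_nonneg (pow_nonneg hz0 3)]
    norm_num
  have htri := mul_le_mul_of_nonneg_right tri (pow_nonneg hg.le 2)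
  have hK : (0:ℝ) < β⁻¹ := by positivity
  unfold K
  simp only [div_eq_mul_inv]
  norm_num [div_eq_mul_inv] at t1 t2 t3 htri ⊢
  linarith

lemma bPFggz (hβ : 0 < β) (hg : 0 < g) (hg2 : g ≤ 2) (hz0 : 0 ≤ z) (hzg : z ≤ g) :
    |PFggz β g z| * g ^ 3 ≤ K β := by
  have t1 := bA2 hβ hg
  have t2 := term_bound hz0 hzg hg hg2 1 3 3 1 rfl (by positivity) (bB2 hβ hg)
  have t3 := term_bound hz0 hzg hg hg2 2 3 5 0 rfl (by norm_num) (bC2 hβ hg)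
  have tri : |PFggz β g z| ≤ |gA2 β g| + 2*|gB2 β g| * z^1 + 3*|gC2 β g| * z^2 := by
    unfold PFggz
    refine (abs_add_three _ _ _).trans ?_
    simp only [abs_mul]
    rw [abs_of_nonneg hz0, abs_of_nonneg (pow_nonneg hz0 2)]
    norm_num
  have htri := mul_le_mul_of_nonneg_right tri (pow_nonneg hg.le 3)
  have hK : (0:ℝ) < β⁻¹ := by positivity
  unfold K
  simp only [div_eq_mul_inv]
  norm_num [div_eq_mul_inv] at t1 t2 t3 htri ⊢
  nlinarith [abs_nonneg (gB2 β g), abs_nonneg (gC2 β g)]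

/-- Proposition B.1 (mixed case): pointwise bounds on `Ψ` and its derivatives up to
third order in the cusp region. -/
theorem Psi_bounds_mixed (δ βΩ : ℝ) (hδ : δ ∈ Set.Ioo (0 : ℝ) (1 / 4)) (hβΩ : 0 < βΩ) :
    ∃ C : ℝ, 0 < C ∧ ∀ h ∈ Set.Ioo (0 : ℝ) (1 / 4), ∀ r z : ℝ,
      0 < r → r < δ → 0 < z → z < h + gam r →
      |Psi βΩ h r z| ≤ C ∧
      |dZ (Psi βΩ h) r z| ≤ C / (h + gam r) ∧
      |dR (Psi βΩ h) r z| ≤ C * r / (h + gam r) ∧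
      |dR (dR (Psi βΩ h)) r z| ≤ C / (h + gam r) ∧
      |dZ (dZ (Psi βΩ h)) r z| ≤ C / (h + gam r) ^ 2 ∧
      |dZ (dR (Psi βΩ h)) r z| ≤ C * r / (h + gam r) ^ 2 ∧
      |dZ (dZ (dZ (Psi βΩ h))) r z| ≤ C / (h + gam r) ^ 3 ∧
      |dZ (dR (dR (Psi βΩ h))) r z| ≤ C / (h + gam r) ^ 2 ∧
      |dZ (dZ (dR (Psi βΩ h))) r z| ≤ C * r / (h + gam r) ^ 3 := by
  have hK := K_pos hβΩ
  refine ⟨20 * K βΩ, by positivity, fun h hmem r z hr0 hrδ hz0' hzlt => ?_⟩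
  obtain ⟨hh, hh4⟩ := hmem
  have hr14 : r < 1/4 := lt_trans hrδ hδ.2
  have hg : 0 < h + gam r := hgpos hh r
  have hg2 : h + gam r ≤ 2 := by have := gam_le_one r; linarith
  have hr2 : r^2 < 1 := by nlinarith
  have hz0 : 0 ≤ z := hz0'.le
  have hzg : z ≤ h + gam r := hzlt.le
  have hs : 1/2 ≤ Real.sqrt (1 - r^2) := by
    have h1 : Real.sqrt (1/4) ≤ Real.sqrt (1 - r^2) := Real.sqrt_le_sqrt (by nlinarith)
    have h2 : Real.sqrt (1/4) = 1/2 := by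
      rw [show (1/4:ℝ) = (1/2)^2 by norm_num, Real.sqrt_sq (by norm_num : (0:ℝ) ≤ 1/2)]
    linarith
  have hsp : 0 < Real.sqrt (1 - r^2) := by linarith
  have hga0 : 0 ≤ gam1 r := by unfold gam1; positivity
  have hga2r : gam1 r ≤ 2*r := by
    unfold gam1; rw [div_le_iff₀ hsp]; nlinarith
  have hgb0 : 0 ≤ gam2 r := by unfold gam2; positivity
  have hgb8 : gam2 r ≤ 8 := by
    unfold gam2; rw [div_le_iff₀ (by positivity)]
    have := pow_le_pow_left₀ (by norm_num : (0:ℝ) ≤ 1/2) hs 3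
    nlinarith [this]
  have hr2g : r^2 ≤ 2*(h + gam r) := by
    have h1 := sq_le_two_gam hr2.le
    linarith
  have hgam1sq : gam1 r ^ 2 ≤ 8 * (h + gam r) := by nlinarith [hga0, hga2r, hr2g, hr0]
  have b0 := bPF hβΩ hg hg2 hz0 hzg
  have b1 := bPFz hβΩ hg hg2 hz0 hzg
  have b2 := bPFzz hβΩ hg hg2 hz0 hzg
  have b3 := bPFg hβΩ hg hg2 hz0 hzg
  have b4 := bPFgz hβΩ hg hg2 hz0 hzg
  have b5 := bPFgzz hβΩ hg hg2 hz0 hzg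
  have b6 := bPFgg hβΩ hg hg2 hz0 hzg
  have b7 := bPFggz hβΩ hg hg2 hz0 hzg
  refine ⟨?_, ?_, ?_, ?_, ?_, ?_, ?_, ?_, ?_⟩
  · rw [psi_eq hβΩ hh r z]; linarith
  · rw [LZ hβΩ hh r z, le_div_iff₀ hg]; linarith
  · rw [LR hβΩ hh hr2 z, abs_mul, abs_of_nonneg hga0, le_div_iff₀ hg]
    linarith [mul_le_mul b3 hga2r hga0 hK.le, mul_nonneg hK.le hr0.le]
  · rw [LRR hβΩ hh hr2 z, le_div_iff₀ hg]
    have tri : |PFgg βΩ (h+gam r) z * gam1 r ^ 2 + PFg βΩ (h+gam r) z * gam2 r|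
        ≤ |PFgg βΩ (h+gam r) z| * gam1 r ^ 2 + |PFg βΩ (h+gam r) z| * gam2 r := by
      refine (abs_add_le _ _).trans ?_
      rw [abs_mul, abs_mul, abs_of_nonneg hgb0, abs_of_nonneg (sq_nonneg (gam1 r))]
    have e1 : |PFgg βΩ (h+gam r) z| * gam1 r ^ 2 * (h+gam r) ≤ 8 * K βΩ := by
      linarith [b6, mul_le_mul_of_nonneg_right (mul_le_mul_of_nonneg_left hgam1sq
        (abs_nonneg (PFgg βΩ (h+gam r) z))) hg.le]
    have e2 : |PFg βΩ (h+gam r) z| * gam2 r * (h+gam r) ≤ 8 * K βΩ := by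
      linarith [b3, mul_le_mul_of_nonneg_right (mul_le_mul_of_nonneg_left hgb8
        (abs_nonneg (PFg βΩ (h+gam r) z))) hg.le]
    linarith [mul_le_mul_of_nonneg_right tri hg.le, e1, e2, hK]
  · rw [LZZ hβΩ hh r z, le_div_iff₀ (pow_pos hg 2)]; linarith
  · rw [LRZ hβΩ hh hr2 z, abs_mul, abs_of_nonneg hga0, le_div_iff₀ (pow_pos hg 2)]
    linarith [mul_le_mul b4 hga2r hga0 hK.le, mul_nonneg hK.le hr0.le]
  · rw [LZZZ hβΩ hh r z, le_div_iff₀ (pow_pos hg 3), abs_mul]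
    have h6 : |(6:ℝ)| = 6 := by norm_num
    rw [h6]
    have hbc := bC hβΩ hg
    have hK100 : (100:ℝ) ≤ K βΩ := by
      unfold K
      have : (0:ℝ) ≤ 100/βΩ := by positivity
      linarith
    linarith [hbc, hK100, abs_nonneg (gC βΩ (h+gam r))]
  · rw [LRRZ hβΩ hh hr2 z, le_div_iff₀ (pow_pos hg 2)]
    have tri : |PFggz βΩ (h+gam r) z * gam1 r ^ 2 + PFgz βΩ (h+gam r) z * gam2 r|
        ≤ |PFggz βΩ (h+gam r) z| * gam1 r ^ 2 + |PFgz βΩ (h+gam r) z| * gam2 r := by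
      refine (abs_add_le _ _).trans ?_
      rw [abs_mul, abs_mul, abs_of_nonneg hgb0, abs_of_nonneg (sq_nonneg (gam1 r))]
    have e1 : |PFggz βΩ (h+gam r) z| * gam1 r ^ 2 * (h+gam r)^2 ≤ 8 * K βΩ := by
      linarith [b7, mul_le_mul_of_nonneg_right (mul_le_mul_of_nonneg_left hgam1sq
        (abs_nonneg (PFggz βΩ (h+gam r) z))) (pow_nonneg hg.le 2)]
    have e2 : |PFgz βΩ (h+gam r) z| * gam2 r * (h+gam r)^2 ≤ 8 * K βΩ := by
      linarith [b4, mul_le_mul_of_nonneg_right (mul_le_mul_of_nonneg_left hgb8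
        (abs_nonneg (PFgz βΩ (h+gam r) z))) (pow_nonneg hg.le 2)]
    linarith [mul_le_mul_of_nonneg_right tri (pow_nonneg hg.le 2), e1, e2, hK]
  · rw [LRZZ hβΩ hh hr2 z, abs_mul, abs_of_nonneg hga0, le_div_iff₀ (pow_pos hg 3)]
    linarith [mul_le_mul b5 hga2r hga0 hK.le, mul_nonneg hK.le hr0.le]
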